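/- Let C ≥ 0 and let W, V : ℝ → ℝ be functions that are differentiable at every t ∈ [0, 1] and satisfy, for every t ∈ [0, 1], the system W′(t) = (λ̂ + z(t) − L)·W(t) − L·V(t), V′(t) = (λ̌ + z(t) + L)·V(t) + L·W(t), together with the boundary conditions W(1) = 0 and V(0) = e₊^{−1}·W(0) + C. Then V(1) = C · exp(λ₋ + ∫₀¹ z(τ) dτ). In particular, if C = c · exp(−λ₊ − ∫₀¹ z(τ) dτ) for some c ≥ 0, then V(1) = c · e^{λ₋ − λ₊}. -/

import Mathlib

/-- Boundary value problem on `[0,1]` with `W(1) = 0` and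
`V(0) = e₊⁻¹ W(0) + C`: the solution satisfies `V(1) = C e^{λ₋ + ∫₀¹ z}`;
in particular if `C = c e^{−λ₊ − ∫₀¹ z}` then `V(1) = c e^{λ₋ − λ₊}`. -/
theorem contraction_boundary_value_problem
    (lhat lcheck L : ℝ) (hl : lhat > lcheck) (hL : 0 < L)
    (hgap : lhat - lcheck > 4 * L)
    (D lp lm ep : ℝ)
    (hD : D = (lhat - lcheck) * (lhat - lcheck - 4 * L))
    (hlp : lp = (lhat + lcheck + Real.sqrt D) / 2)
    (hlm : lm = (lhat + lcheck - Real.sqrt D) / 2)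
    (hep : ep = L / (lhat - L - lp))
    (z : ℝ → ℝ) (hz : Continuous z)
    (C : ℝ) (hC : 0 ≤ C)
    (W V : ℝ → ℝ)
    (hWV : ∀ t ∈ Set.Icc (0:ℝ) 1,
      HasDerivAt W ((lhat + z t - L) * W t - L * V t) t ∧
      HasDerivAt V ((lcheck + z t + L) * V t + L * W t) t)
    (hW1 : W 1 = 0)
    (hV0 : V 0 = ep⁻¹ * W 0 + C) :
    V 1 = C * Real.exp (lm + ∫ τ in (0:ℝ)..1, z τ) ∧
    (∀ c : ℝ, 0 ≤ c → C = c * Real.exp (-lp - ∫ τ in (0:ℝ)..1, z τ) →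
      V 1 = c * Real.exp (lm - lp)) := by
  have hD0 : 0 < D := by rw [hD]; nlinarith
  have hs2 : Real.sqrt D ^ 2 = D := Real.sq_sqrt hD0.le
  have hsnn : 0 ≤ Real.sqrt D := Real.sqrt_nonneg D
  -- √D < lhat - lcheck - 2L
  have hslt : Real.sqrt D < lhat - lcheck - 2 * L := by
    nlinarith [hs2, hsnn]
  have ha : 0 < lhat - L - lp := by rw [hlp]; linarith
  have hinv : ep⁻¹ = (lhat - L - lp) / L := by rw [hep, inv_div]
  have hsum : lp + lm = lhat + lcheck := by rw [hlp, hlm]; ring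
  have hprod : lp * lm = lhat * lcheck + L * (lhat - lcheck) := by
    rw [hlp, hlm, hD] at *
    linear_combination (-(1:ℝ)/4) * hs2
  have hkey : (lhat - L - lp) * (lhat - L - lm) = L * L := by
    linear_combination hprod - (lhat - L) * hsum
  have h1 : ep⁻¹ * L = lm - lcheck - L := by
    rw [hinv, div_mul_cancel₀ _ hL.ne']
    linarith
  have h2 : ep⁻¹ * (lhat - L - lm) = L := by
    rw [hinv, div_mul_eq_mul_div, hkey, mul_div_cancel_right₀ _ hL.ne']
  set Y : ℝ → ℝ := fun t => V t - ep⁻¹ * W t with hYdef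
  have hYd : ∀ t ∈ Set.Icc (0:ℝ) 1, HasDerivAt Y ((lm + z t) * Y t) t := by
    intro t ht
    obtain ⟨hW, hV⟩ := hWV t ht
    have h := hV.sub (hW.const_mul ep⁻¹)
    refine h.congr_deriv ?_; symm
    simp only [hYdef]
    linear_combination (W t) * h2 - (V t) * h1 + (z t) * (W t) * (mul_comm ep⁻¹ (1:ℝ))
  set I : ℝ → ℝ := fun t => ∫ τ in (0:ℝ)..t, z τ with hIdef
  have hI : ∀ t : ℝ, HasDerivAt I (z t) t := fun t =>
    (hz.integral_hasStrictDerivAt 0 t).hasDerivAt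
  set E : ℝ → ℝ := fun t => Real.exp (-(lm * t + I t)) with hEdef
  have hE : ∀ t : ℝ, HasDerivAt E (-(lm + z t) * E t) t := by
    intro t
    have h : HasDerivAt (fun t => -(lm * t + I t)) (-(lm + z t)) t := by
      have h' := (((hasDerivAt_id t).const_mul lm).add (hI t)).neg
      refine h'.congr_deriv ?_; symm
      simp
    simpa [hEdef, mul_comm] using h.exp
  set G : ℝ → ℝ := fun t => Y t * E t with hGdef
  have hG : ∀ t ∈ Set.Icc (0:ℝ) 1, HasDerivAt G 0 t := by
    intro t ht
    have h := (hYd t ht).mul (hE t)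
    refine h.congr_deriv ?_; symm
    ring
  have hconst : G 1 = G 0 := by
    have := constant_of_has_deriv_right_zero
      (f := G) (a := 0) (b := 1)
      (fun t ht => ((hG t ht).continuousAt).continuousWithinAt)
      (fun x hx => ((hG x (Set.Ico_subset_Icc_self hx)).hasDerivWithinAt))
      1 (by norm_num)
    exact this
  have hI0 : I 0 = 0 := intervalIntegral.integral_same
  have hG0 : G 0 = C := by
    simp only [hGdef, hEdef, hYdef, hI0, hV0]
    norm_num
  have hG1 : G 1 = V 1 * Real.exp (-(lm + I 1)) := by
    simp only [hGdef, hEdef, hYdef, hW1]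
    ring_nf
  have hmain : V 1 = C * Real.exp (lm + I 1) := by
    have h := hconst
    rw [hG0, hG1] at h
    have : V 1 * Real.exp (-(lm + I 1)) * Real.exp (lm + I 1)
        = C * Real.exp (lm + I 1) := by rw [h]
    rwa [mul_assoc, ← Real.exp_add, neg_add_cancel, Real.exp_zero, mul_one] at this
  refine ⟨hmain, ?_⟩
  intro c hc hCc
  rw [hmain, hCc, mul_assoc, ← Real.exp_add]
  simp only [hIdef]
  ring_nf
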